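/- Let p ∈ (0,1] and θ ∈ (−π, π/2]. Then φ_p(θ) ≥ π/2; in particular φ_p(θ) lies in the interval [max(|θ|, π/2), π). -/

import Mathlib

theorem stmt4 (p θ φ : ℝ) (hp : p ∈ Set.Ioc (0 : ℝ) 1)
    (hθ : θ ∈ Set.Ioc (-Real.pi) (Real.pi / 2))
    (hφ : φ ∈ Set.Ioo |θ| Real.pi ∧
      p * (Real.cos φ - Real.cos θ) + (φ - θ) * Real.sin φ = 0) :
    Real.pi / 2 ≤ φ ∧ φ ∈ Set.Ico (max |θ| (Real.pi / 2)) Real.pi := by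
  obtain ⟨hp0, hp1⟩ := hp
  obtain ⟨hθ1, hθ2⟩ := hθ
  obtain ⟨⟨hφ1, hφ2⟩, heq⟩ := hφ
  have habs : (0:ℝ) ≤ |θ| := abs_nonneg θ
  have hφpos : 0 < φ := lt_of_le_of_lt habs hφ1
  have hsinφ : 0 ≤ Real.sin φ := Real.sin_nonneg_of_nonneg_of_le_pi hφpos.le hφ2.le
  have hθφ : θ < φ := lt_of_le_of_lt (le_abs_self θ) hφ1
  have key : Real.pi / 2 ≤ φ := by
    by_contra h
    push_neg at h
    set f : ℝ → ℝ := fun x => Real.cos x - Real.cos θ + (x - θ) * Real.sin x with hf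
    have hmono : StrictMonoOn f (Set.Icc |θ| φ) := by
      apply strictMonoOn_of_deriv_pos (convex_Icc _ _)
      · fun_prop
      · intro x hx
        rw [interior_Icc] at hx
        have hd : HasDerivAt f ((x - θ) * Real.cos x) x := by
          have h1 : HasDerivAt (fun x : ℝ => Real.cos x - Real.cos θ) (-Real.sin x) x :=
            (Real.hasDerivAt_cos x).sub_const _
          have h2 : HasDerivAt (fun x : ℝ => (x - θ) * Real.sin x)
              (1 * Real.sin x + (x - θ) * Real.cos x) x :=
            ((hasDerivAt_id x).sub_const θ).mul (Real.hasDerivAt_sin x)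
          have := h1.add h2
          rw [show (x - θ) * Real.cos x = -Real.sin x + (1 * Real.sin x + (x - θ) * Real.cos x) by ring]
          exact this
        rw [hd.deriv]
        have hxcos : 0 < Real.cos x :=
          Real.cos_pos_of_mem_Ioo ⟨by nlinarith [Real.pi_pos, hx.1, habs], hx.2.trans h⟩
        have hxθ : θ < x := lt_of_le_of_lt (le_abs_self θ) hx.1
        have : 0 < x - θ := by linarith
        positivity
    have h0 : 0 ≤ f |θ| := by
      have : Real.cos |θ| = Real.cos θ := Real.cos_abs θ
      have hs : 0 ≤ Real.sin |θ| :=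
        Real.sin_nonneg_of_nonneg_of_le_pi habs (by nlinarith [Real.pi_pos, hφ1, hφ2])
      have hθa : 0 ≤ |θ| - θ := by linarith [le_abs_self θ]
      simp only [hf, this]
      nlinarith [mul_nonneg hθa hs]
    have hfφ : 0 < f φ :=
      lt_of_le_of_lt h0 (hmono ⟨le_refl _, hφ1.le⟩ ⟨hφ1.le, le_refl _⟩ hφ1)
    simp only [hf] at hfφ
    nlinarith [mul_pos hp0 hfφ,
      mul_nonneg (mul_nonneg (by linarith : (0:ℝ) ≤ φ - θ) hsinφ) (by linarith : (0:ℝ) ≤ 1 - p)]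
  exact ⟨key, ⟨max_le hφ1.le key, hφ2⟩⟩
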